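/- There is a constant C' ≥ 1, depending only on n and the constant C in the comparability hypothesis between d and μ, such that for every x ∈ ℝⁿ and every r > 0 one has C'⁻¹ rⁿ ≤ μ(B^d(x,r)) ≤ C' rⁿ. In other words, the metric measure space (ℝⁿ, d, μ) is Ahlfors n-regular. -/

import Mathlib

open MeasureTheory Metric Filter
open scoped Topology ENNReal


open MeasureTheory Metric Filter Set
open scoped Topology ENNReal

/-- Continuity from below: if all strictly smaller balls have measure ≤ A,
so does the open ball of radius T. -/
lemma aux_ball_limsup {E : Type*} [MeasurableSpace E] [PseudoMetricSpace E]
    (μ : Measure E) (x : E) (T : ℝ) (A : ℝ≥0∞) (hT : 0 < T)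
    (h : ∀ s : ℝ, 0 < s → s < T → μ (ball x s) ≤ A) : μ (ball x T) ≤ A := by
  have hrad : ∀ k : ℕ, 0 < T - T / (k + 2) ∧ T - T / (k + 2) < T := by
    intro k
    have h2 : (0:ℝ) < (k:ℝ) + 2 := by positivity
    have hle : T / ((k:ℝ) + 2) ≤ T / 2 := by
      apply div_le_div_of_nonneg_left hT.le (by norm_num)
      have : (0:ℝ) ≤ (k:ℝ) := Nat.cast_nonneg k
      linarith
    have hpos : 0 < T / ((k:ℝ) + 2) := by positivity
    constructor
    · have : T / 2 < T := by linarith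
      linarith
    · linarith
  have hmono : Monotone fun k : ℕ => ball x (T - T / (k + 2)) := by
    intro k l hkl
    apply ball_subset_ball
    have hkl' : ((k:ℝ) + 2) ≤ ((l:ℝ) + 2) := by
      have := (Nat.cast_le (α := ℝ)).mpr hkl; linarith
    have : T / ((l:ℝ) + 2) ≤ T / ((k:ℝ) + 2) :=
      div_le_div_of_nonneg_left hT.le (by positivity) hkl'
    linarith
  have hsub : ball x T ⊆ ⋃ k : ℕ, ball x (T - T / (k + 2)) := by
    intro y hy
    rw [mem_ball] at hy
    have hε : 0 < T - dist y x := by linarith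
    obtain ⟨k, hk⟩ := exists_nat_gt (T / (T - dist y x))
    refine Set.mem_iUnion.2 ⟨k, ?_⟩
    rw [mem_ball]
    have hk2 : T / (T - dist y x) < (k:ℝ) + 2 := by linarith
    have h2 : (0:ℝ) < (k:ℝ) + 2 := by positivity
    have hT' : T < (T - dist y x) * ((k:ℝ) + 2) := by
      have := (div_lt_iff₀ hε).mp hk2
      nlinarith
    have : T / ((k:ℝ) + 2) < T - dist y x := by
      rw [div_lt_iff₀ h2]; nlinarith
    linarith
  calc μ (ball x T) ≤ μ (⋃ k : ℕ, ball x (T - T / (k + 2))) := measure_mono hsub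
    _ = ⨆ k : ℕ, μ (ball x (T - T / (k + 2))) := hmono.measure_iUnion
    _ ≤ A := iSup_le fun k => h _ (hrad k).1 (hrad k).2

/-- Growth lemma coming from doubling: passing from radius t to 2t multiplies
the measure by a definite factor. -/
lemma aux_grow (n : ℕ) (hn : 2 ≤ n) (μ : Measure (EuclideanSpace ℝ (Fin n)))
    (Cd : ℝ) (hCd : 1 ≤ Cd)
    (hdoub : ∀ (x : EuclideanSpace ℝ (Fin n)) (r : ℝ), 0 < r →
      μ (ball x (2 * r)) ≤ ENNReal.ofReal Cd * μ (ball x r))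
    (x : EuclideanSpace ℝ (Fin n)) (t : ℝ) (ht : 0 < t) :
    (ENNReal.ofReal Cd ^ 3 + 1) * μ (ball x t) ≤ ENNReal.ofReal Cd ^ 3 * μ (ball x (2 * t)) := by
  set K := ENNReal.ofReal Cd with hK
  set i0 : Fin n := ⟨0, by omega⟩
  set z : EuclideanSpace ℝ (Fin n) := x + EuclideanSpace.single i0 (3 * t / 2) with hz
  have hdist : dist x z = 3 * t / 2 := by
    rw [hz, dist_self_add_right, EuclideanSpace.norm_single, Real.norm_eq_abs,
      abs_of_pos (by linarith)]
  have hdisj : Disjoint (ball x t) (ball z (t / 2)) :=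
    ball_disjoint_ball (by rw [hdist]; linarith)
  have h1 : μ (ball x t) + μ (ball z (t / 2)) ≤ μ (ball x (2 * t)) := by
    rw [← measure_union hdisj measurableSet_ball]
    apply measure_mono
    apply Set.union_subset
    · exact ball_subset_ball (by linarith)
    · exact ball_subset_ball' (by rw [dist_comm, hdist]; linarith)
  have h2 : μ (ball x t) ≤ K ^ 3 * μ (ball z (t / 2)) := by
    have d1 := hdoub z (t / 2) (by linarith)
    have d2 := hdoub z (2 * (t / 2)) (by linarith)
    have d3 := hdoub z (2 * (2 * (t / 2))) (by linarith)
    calc μ (ball x t) ≤ μ (ball z (2 * (2 * (2 * (t / 2))))) := by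
          apply measure_mono
          apply ball_subset_ball' (by rw [hdist]; linarith)
      _ ≤ K * μ (ball z (2 * (2 * (t / 2)))) := d3
      _ ≤ K * (K * μ (ball z (2 * (t / 2)))) := mul_le_mul_right d2 _
      _ ≤ K * (K * (K * μ (ball z (t / 2)))) := mul_le_mul_right (mul_le_mul_right d1 _) _
      _ = K ^ 3 * μ (ball z (t / 2)) := by ring
  calc (K ^ 3 + 1) * μ (ball x t) = K ^ 3 * μ (ball x t) + μ (ball x t) := by ring
    _ ≤ K ^ 3 * μ (ball x t) + K ^ 3 * μ (ball z (t / 2)) := add_le_add_right h2 _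
    _ = K ^ 3 * (μ (ball x t) + μ (ball z (t / 2))) := by ring
    _ ≤ K ^ 3 * μ (ball x (2 * t)) := mul_le_mul_right h1 _

/-- Measures of balls around a point are unbounded. -/
lemma aux_unbounded (n : ℕ) (hn : 2 ≤ n) (μ : Measure (EuclideanSpace ℝ (Fin n)))
    (Cd : ℝ) (hCd : 1 ≤ Cd)
    (hdoub : ∀ (x : EuclideanSpace ℝ (Fin n)) (r : ℝ), 0 < r →
      μ (ball x (2 * r)) ≤ ENNReal.ofReal Cd * μ (ball x r))
    (hpos : ∀ (x : EuclideanSpace ℝ (Fin n)) (r : ℝ), 0 < r → 0 < μ (ball x r))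
    (hfin : ∀ (x : EuclideanSpace ℝ (Fin n)) (r : ℝ), 0 < r → μ (ball x r) < ⊤)
    (x : EuclideanSpace ℝ (Fin n)) (A : ℝ≥0∞) (hA : A ≠ ⊤) :
    ∃ t : ℝ, 0 < t ∧ A < μ (ball x t) := by
  have hCd0 : (0:ℝ) < Cd := by linarith
  set b : ℕ → ℝ := fun k => (μ (ball x (2 ^ k))).toReal with hb
  have hbpos : ∀ k, 0 < b k := fun k =>
    ENNReal.toReal_pos (hpos x _ (by positivity)).ne' (hfin x _ (by positivity)).ne
  have hstep : ∀ k, (Cd ^ 3 + 1) * b k ≤ Cd ^ 3 * b (k + 1) := by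
    intro k
    have hg := aux_grow n hn μ Cd hCd hdoub x (2 ^ k) (by positivity)
    have h2 : (2:ℝ) * 2 ^ k = 2 ^ (k + 1) := by ring
    rw [h2] at hg
    have hfin2 : ENNReal.ofReal Cd ^ 3 * μ (ball x ((2:ℝ) ^ (k + 1))) ≠ ⊤ :=
      ENNReal.mul_ne_top (by simp) (hfin x _ (by positivity)).ne
    have := ENNReal.toReal_mono hfin2 hg
    rw [ENNReal.toReal_mul, ENNReal.toReal_mul, ENNReal.toReal_add (by simp) (by simp),
      ENNReal.toReal_pow, ENNReal.toReal_ofReal hCd0.le, ENNReal.toReal_one] at this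
    exact this
  set q : ℝ := (Cd ^ 3 + 1) / Cd ^ 3 with hq
  have hq1 : 1 < q := by
    rw [hq, lt_div_iff₀ (by positivity)]; linarith
  have hgeo : ∀ k, q ^ k * b 0 ≤ b k := by
    intro k
    induction k with
    | zero => simp
    | succ k ih =>
      have hqb : q * b k ≤ b (k + 1) := by
        rw [hq, div_mul_eq_mul_div, div_le_iff₀ (by positivity)]
        have := hstep k; nlinarith
      calc q ^ (k + 1) * b 0 = q * (q ^ k * b 0) := by ring
        _ ≤ q * b k := by
            apply mul_le_mul_of_nonneg_left ih (by linarith)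
        _ ≤ b (k + 1) := hqb
  obtain ⟨k, hk⟩ := pow_unbounded_of_one_lt (A.toReal / b 0) hq1
  refine ⟨2 ^ k, by positivity, ?_⟩
  have hAb : A.toReal < b k := by
    have h1 := (div_lt_iff₀ (hbpos 0)).mp hk
    have := hgeo k
    linarith
  exact (ENNReal.toReal_lt_toReal hA (hfin x _ (by positivity)).ne).mp hAb

/-- Small balls have small measure (since points are null). -/
lemma aux_small {E : Type*} [MeasurableSpace E] [MetricSpace E] [OpensMeasurableSpace E]
    (μ : Measure E) (x : E) (h0 : μ {x} = 0)
    (hfin : μ (ball x 1) ≠ ⊤) (M : ℝ≥0∞) (hM : 0 < M) :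
    ∃ t : ℝ, 0 < t ∧ μ (ball x t) ≤ M := by
  have hanti : Antitone fun k : ℕ => ball x (1 / ((k:ℝ) + 1)) := by
    intro k l hkl
    apply ball_subset_ball
    apply div_le_div_of_nonneg_left one_pos.le (by positivity)
    have := (Nat.cast_le (α := ℝ)).mpr hkl; linarith
  have hiInt : ⋂ k : ℕ, ball x (1 / ((k:ℝ) + 1)) = {x} := by
    ext y
    simp only [Set.mem_iInter, mem_ball, Set.mem_singleton_iff]
    constructor
    · intro h
      by_contra hne
      have hd : 0 < dist y x := dist_pos.mpr hne
      obtain ⟨k, hk⟩ := exists_nat_gt (1 / dist y x)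
      have hk0 : (0:ℝ) < (k:ℝ) + 1 := by positivity
      have := h k
      have h1 : 1 / ((k:ℝ) + 1) < dist y x := by
        rw [div_lt_iff₀ hk0]
        have h2 : (1:ℝ) < (k:ℝ) * dist y x := (div_lt_iff₀ hd).mp hk
        nlinarith
      linarith
    · intro h k
      subst h
      simp only [dist_self]
      positivity
  have hmeas := hanti.measure_iInter (μ := μ)
    (fun k => measurableSet_ball.nullMeasurableSet)
    ⟨0, by
      refine ne_top_of_le_ne_top hfin (measure_mono (ball_subset_ball ?_))
      norm_num⟩
  rw [hiInt, h0] at hmeas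
  have hlt : ⨅ k : ℕ, μ (ball x (1 / ((k:ℝ) + 1))) < M := by rw [← hmeas]; exact hM
  obtain ⟨k, hk⟩ := iInf_lt_iff.mp hlt
  exact ⟨1 / ((k:ℝ) + 1), by positivity, hk.le⟩

/-- Ahlfors n-regularity of `(ℝⁿ, d, μ)` when `μ = ω dLⁿ` is doubling and the metric
`d` satisfies `d(x,y)ⁿ ≈ μ(B(x,|x-y|))`: there is `C' ≥ 1` (depending only on `n` and
the comparability constant `C`) with `C'⁻¹ rⁿ ≤ μ(B^d(x,r)) ≤ C' rⁿ` for all `x, r > 0`. -/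
theorem ahlfors_regular_of_strongAinfty
    (n : ℕ) (hn : 2 ≤ n)
    (ω : EuclideanSpace ℝ (Fin n) → ℝ) (hω : ∀ x, 0 < ω x)
    (hωloc : LocallyIntegrable ω volume)
    (μ : Measure (EuclideanSpace ℝ (Fin n)))
    (hμ : μ = volume.withDensity fun x => ENNReal.ofReal (ω x))
    (Cd : ℝ) (hCd : 1 ≤ Cd)
    (hdoub : ∀ (x : EuclideanSpace ℝ (Fin n)) (r : ℝ), 0 < r →
      μ (ball x (2 * r)) ≤ ENNReal.ofReal Cd * μ (ball x r))
    (hpos : ∀ (x : EuclideanSpace ℝ (Fin n)) (r : ℝ), 0 < r → 0 < μ (ball x r))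
    (hfin : ∀ (x : EuclideanSpace ℝ (Fin n)) (r : ℝ), 0 < r → μ (ball x r) < ⊤)
    (d : EuclideanSpace ℝ (Fin n) → EuclideanSpace ℝ (Fin n) → ℝ)
    (hd_self : ∀ x, d x x = 0)
    (hd_pos : ∀ x y, x ≠ y → 0 < d x y)
    (hd_symm : ∀ x y, d x y = d y x)
    (hd_tri : ∀ x y z, d x z ≤ d x y + d y z)
    (hd_top : ∀ (x : EuclideanSpace ℝ (Fin n)), ∀ ε : ℝ, 0 < ε →
      (∃ δ > 0, ∀ y, dist x y < δ → d x y < ε) ∧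
      (∃ δ > 0, ∀ y, d x y < δ → dist x y < ε))
    (C : ℝ) (hC : 1 ≤ C)
    (hcomp : ∀ x y : EuclideanSpace ℝ (Fin n),
      C⁻¹ * (μ (ball x (dist x y))).toReal ≤ d x y ^ n ∧
      d x y ^ n ≤ C * (μ (ball x (dist x y))).toReal) :
    ∃ C' : ℝ, 1 ≤ C' ∧ ∀ (x : EuclideanSpace ℝ (Fin n)) (r : ℝ), 0 < r →
      ENNReal.ofReal (C'⁻¹ * r ^ n) ≤ μ {y | d x y < r} ∧
      μ {y | d x y < r} ≤ ENNReal.ofReal (C' * r ^ n) := by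
  have hC0 : (0:ℝ) < C := by linarith
  have hCd0 : (0:ℝ) < Cd := by linarith
  refine ⟨2 * C * Cd, by nlinarith, fun x r hr => ?_⟩
  have hrn : (0:ℝ) < r ^ n := by positivity
  have h0 : μ {x} = 0 := by
    haveI : Nonempty (Fin n) := ⟨⟨0, by omega⟩⟩
    haveI : Nontrivial (EuclideanSpace ℝ (Fin n)) := by
      infer_instance
    rw [hμ]
    exact withDensity_absolutelyContinuous volume _ (measure_singleton x)
  constructor
  · -- lower bound
    set M := ENNReal.ofReal (r ^ n / (2 * C)) with hM
    have hMpos : 0 < M := ENNReal.ofReal_pos.mpr (by positivity)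
    obtain ⟨ts, hts, htsM⟩ := aux_small μ x h0 (hfin x 1 one_pos).ne M hMpos
    obtain ⟨t0, ht0, ht0M⟩ := aux_unbounded n hn μ Cd hCd hdoub hpos hfin x M
      ENNReal.ofReal_ne_top
    set S := {t : ℝ | 0 < t ∧ μ (ball x t) ≤ M} with hS
    have hSne : S.Nonempty := ⟨ts, hts, htsM⟩
    have hSbdd : BddAbove S := by
      refine ⟨t0, fun t ht => ?_⟩
      by_contra hlt
      push_neg at hlt
      exact absurd (le_trans (measure_mono (ball_subset_ball hlt.le)) ht.2)
        (not_le.mpr ht0M)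
    set T := sSup S with hT
    have hTpos : 0 < T := lt_of_lt_of_le hts (le_csSup hSbdd ⟨hts, htsM⟩)
    have hallb : ∀ s : ℝ, 0 < s → s < T → μ (ball x s) ≤ M := by
      intro s hs hsT
      obtain ⟨t, htS, hst⟩ := exists_lt_of_lt_csSup hSne hsT
      exact le_trans (measure_mono (ball_subset_ball hst.le)) htS.2
    have hTle : μ (ball x T) ≤ M := aux_ball_limsup μ x T M hTpos hallb
    have h2T : M < μ (ball x (2 * T)) := by
      by_contra hle
      push_neg at hle
      have h2TS : 2 * T ∈ S := ⟨by linarith, hle⟩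
      have := le_csSup hSbdd h2TS
      linarith
    have hlow : M ≤ ENNReal.ofReal Cd * μ (ball x T) :=
      le_trans h2T.le (hdoub x T hTpos)
    have hsubd : ball x T ⊆ {y | d x y < r} := by
      intro y hy
      rcases eq_or_ne x y with rfl | hxy
      · simpa [hd_self] using hr
      · have hdy : 0 < dist x y := dist_pos.mpr hxy
        have hdyT : dist x y < T := by rw [dist_comm]; exact mem_ball.mp hy
        have hball : μ (ball x (dist x y)) ≤ M := hallb _ hdy hdyT
        have htr : (μ (ball x (dist x y))).toReal ≤ r ^ n / (2 * C) := by
          calc (μ (ball x (dist x y))).toReal ≤ M.toReal :=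
                ENNReal.toReal_mono ENNReal.ofReal_ne_top hball
            _ = r ^ n / (2 * C) := ENNReal.toReal_ofReal (by positivity)
        have hpow : d x y ^ n < r ^ n := by
          calc d x y ^ n ≤ C * (μ (ball x (dist x y))).toReal := (hcomp x y).2
            _ ≤ C * (r ^ n / (2 * C)) := mul_le_mul_of_nonneg_left htr hC0.le
            _ = r ^ n / 2 := by field_simp
            _ < r ^ n := by linarith
        exact lt_of_pow_lt_pow_left₀ n hr.le hpow
    have hKne0 : ENNReal.ofReal Cd ≠ 0 := by
      simp only [ne_eq, ENNReal.ofReal_eq_zero, not_le]; exact hCd0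
    rw [← ENNReal.mul_le_mul_iff_right hKne0 ENNReal.ofReal_ne_top]
    calc ENNReal.ofReal Cd * ENNReal.ofReal ((2 * C * Cd)⁻¹ * r ^ n)
        = ENNReal.ofReal (r ^ n / (2 * C)) := by
          rw [← ENNReal.ofReal_mul hCd0.le]
          congr 1
          field_simp
      _ ≤ ENNReal.ofReal Cd * μ (ball x T) := hlow
      _ ≤ ENNReal.ofReal Cd * μ {y | d x y < r} :=
          mul_le_mul_right (measure_mono hsubd) _
  · -- upper bound
    set A := ENNReal.ofReal (C * r ^ n) with hA
    obtain ⟨t0, ht0, hA0⟩ := aux_unbounded n hn μ Cd hCd hdoub hpos hfin x A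
      ENNReal.ofReal_ne_top
    set U := {t : ℝ | 0 < t ∧ A < μ (ball x t)} with hUdef
    have hU : ∀ t ∈ U, {y | d x y < r} ⊆ ball x t := by
      rintro t ⟨htpos, htA⟩ y hy
      rw [mem_ball, dist_comm]
      by_contra hge
      push_neg at hge
      have hdy : 0 < dist x y := lt_of_lt_of_le htpos hge
      have hxy : x ≠ y := fun h => by simp [h] at hdy
      have hdpos : 0 < d x y := hd_pos x y hxy
      have hpow : d x y ^ n < r ^ n :=
        pow_lt_pow_left₀ hy hdpos.le (by omega)
      have htoReal : (μ (ball x (dist x y))).toReal < C * r ^ n := by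
        have h1 := (hcomp x y).1
        have h2 : C⁻¹ * (μ (ball x (dist x y))).toReal < r ^ n := lt_of_le_of_lt h1 hpow
        have h3 : (μ (ball x (dist x y))).toReal = C * (C⁻¹ * (μ (ball x (dist x y))).toReal) := by
          field_simp
        rw [h3]
        exact mul_lt_mul_of_pos_left h2 hC0
      have hlt : μ (ball x (dist x y)) < A :=
        (ENNReal.lt_ofReal_iff_toReal_lt (hfin x _ hdy).ne).mpr htoReal
      have hmono : μ (ball x t) ≤ μ (ball x (dist x y)) :=
        measure_mono (ball_subset_ball hge)
      exact absurd (lt_of_lt_of_le htA hmono) (not_lt.mpr hlt.le)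
    have hUne : U.Nonempty := ⟨t0, ht0, hA0⟩
    have hUbdd : BddBelow U := ⟨0, fun t ht => ht.1.le⟩
    set t1 := sInf U with ht1
    have ht1nonneg : 0 ≤ t1 := le_csInf hUne fun t ht => ht.1.le
    have hfinal : μ {y | d x y < r} ≤ ENNReal.ofReal (Cd * (C * r ^ n)) := by
      rcases eq_or_lt_of_le ht1nonneg with heq | hlt
      · have hsub : {y | d x y < r} ⊆ {x} := by
          intro y hy
          have hle : dist y x ≤ t1 := le_csInf hUne fun t ht => (mem_ball.mp (hU t ht hy)).le
          rw [← heq] at hle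
          have : dist y x = 0 := le_antisymm hle dist_nonneg
          simpa [Set.mem_singleton_iff] using dist_eq_zero.mp this
        calc μ {y | d x y < r} ≤ μ {x} := measure_mono hsub
          _ = 0 := h0
          _ ≤ _ := zero_le
      · have h2t1 : 2 * t1 ∈ U := by
          obtain ⟨t, htU, htlt⟩ := (csInf_lt_iff hUbdd hUne).mp (show t1 < 2 * t1 by linarith)
          exact ⟨by linarith, lt_of_lt_of_le htU.2 (measure_mono (ball_subset_ball htlt.le))⟩
        have hsmall : ∀ s : ℝ, 0 < s → s < t1 → μ (ball x s) ≤ A := by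
          intro s hs hst1
          by_contra hgt
          push_neg at hgt
          exact absurd (csInf_le hUbdd ⟨hs, hgt⟩) (not_le.mpr hst1)
        have ht1le : μ (ball x t1) ≤ A := aux_ball_limsup μ x t1 A hlt hsmall
        calc μ {y | d x y < r} ≤ μ (ball x (2 * t1)) := measure_mono (hU _ h2t1)
          _ ≤ ENNReal.ofReal Cd * μ (ball x t1) := hdoub x t1 hlt
          _ ≤ ENNReal.ofReal Cd * A := mul_le_mul_right ht1le _
          _ = ENNReal.ofReal (Cd * (C * r ^ n)) := (ENNReal.ofReal_mul hCd0.le).symm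
    refine le_trans hfinal (ENNReal.ofReal_le_ofReal ?_)
    nlinarith [mul_pos (mul_pos hC0 hCd0) hrn]
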